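/- arXiv:1808.08298 — 4 statements merged into one kernel-verified Lean document; each statement's English description precedes it below -/
import Mathlib

section
/- Let X be a locally compact Hausdorff space with a continuous proper G-action and let π : C₀(X) → B(H) be a nondegenerate covariant representation on the G-Hilbert space H. Then for every compact operator T on H and every φ ∈ C₀(X), the norm ‖π(φ) · (u_g T u_g⁻¹)‖ tends to 0 as g → ∞ along the cocompact filter on G. -/
open scoped ZeroAtInfty
open Filter MeasureTheory Topology

noncomputable section

set_option linter.unusedSectionVars false
set_option maxHeartbeats 1000000

variable {G : Type*} [Group G] [TopologicalSpace G] [IsTopologicalGroup G]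
  [LocallyCompactSpace G] [SecondCountableTopology G] [T2Space G]
variable {X : Type*} [TopologicalSpace X] [LocallyCompactSpace X] [T2Space X]
variable [MulAction G X] [ContinuousSMul G X]
variable {H : Type*} [NormedAddCommGroup H] [InnerProductSpace ℂ H] [CompleteSpace H]
  [SecondCountableTopology H]

/-- The translation action of `G` on `C₀(X, ℂ)`: `(g • φ)(x) = φ(g⁻¹ • x)`. -/
def C0smul (g : G) (φ : C₀(X, ℂ)) : C₀(X, ℂ) where
  toFun := fun x => φ (g⁻¹ • x)
  continuous_toFun := φ.continuous.comp (continuous_const_smul g⁻¹)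
  zero_at_infty' := φ.zero_at_infty'.comp
    ((Homeomorph.smul (g⁻¹ : G)).toCocompactMap.cocompact_tendsto')

/-- Conjugation `g(T) = u_g T u_g⁻¹` by the unitary representation `u`. -/
def conjU (u : G →* unitary (H →L[ℂ] H)) (g : G) (T : H →L[ℂ] H) : H →L[ℂ] H :=
  (u g : H →L[ℂ] H) * T * ((u g⁻¹ : unitary (H →L[ℂ] H)) : H →L[ℂ] H)

/-- Membership in `C₀(G, K(H))`: norm-continuous, compact-operator valued, and
norm vanishing along the cocompact filter on `G`. -/
def InC0GK (f : G → (H →L[ℂ] H)) : Prop :=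
  Continuous f ∧ (∀ g, IsCompactOperator (⇑(f g))) ∧
    Tendsto (fun g => ‖f g‖) (cocompact G) (𝓝 0)

/-! ### Auxiliary lemmas -/

@[simp] lemma C0smul_apply (g : G) (φ : C₀(X, ℂ)) (x : X) : C0smul g φ x = φ (g⁻¹ • x) := rfl

lemma C0smul_sub (g : G) (φ ψ : C₀(X, ℂ)) :
    C0smul g (φ - ψ) = C0smul g φ - C0smul g ψ := by ext x; simp

lemma C0_norm_apply_le (f : C₀(X, ℂ)) (x : X) : ‖f x‖ ≤ ‖f‖ := by
  rw [← ZeroAtInftyContinuousMap.norm_toBCF_eq_norm]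
  exact f.toBCF.norm_coe_le_norm x

lemma norm_C0smul_le (g : G) (φ : C₀(X, ℂ)) : ‖C0smul g φ‖ ≤ ‖φ‖ := by
  rw [← ZeroAtInftyContinuousMap.norm_toBCF_eq_norm]
  exact (BoundedContinuousFunction.norm_le (norm_nonneg φ)).mpr
    fun x => C0_norm_apply_le φ _

lemma approx_tendsto_zero {α A : Type*} [NormedAddCommGroup A] {l : Filter α} {f : α → A}
    (h : ∀ ε > 0, ∃ f' : α → A, (∀ x, ‖f x - f' x‖ ≤ ε) ∧ Tendsto f' l (𝓝 0)) :
    Tendsto f l (𝓝 0) := by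
  rw [NormedAddCommGroup.tendsto_nhds_zero]
  intro ε hε
  obtain ⟨f', hf', ht⟩ := h (ε/4) (by positivity)
  filter_upwards [NormedAddCommGroup.tendsto_nhds_zero.mp ht (ε/2) (by positivity)] with x hx
  have h1 : ‖f x‖ ≤ ‖f x - f' x‖ + ‖f' x‖ := by
    simpa using norm_add_le (f x - f' x) (f' x)
  linarith [hf' x]

lemma exists_compactSupport_approx (φ : C₀(X, ℂ)) {ε : ℝ} (hε : 0 < ε) :
    ∃ ψ : C₀(X, ℂ), HasCompactSupport ⇑ψ ∧ ‖φ - ψ‖ ≤ ε := by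
  have h1 : {x : X | ‖φ x‖ < ε} ∈ cocompact X := by
    have h := φ.zero_at_infty' (Metric.ball_mem_nhds (0:ℂ) hε)
    refine Filter.mem_of_superset h fun x hx => ?_
    simpa [Metric.mem_ball, dist_zero_right] using hx
  obtain ⟨K, hK, hKs⟩ := Filter.mem_cocompact.mp h1
  obtain ⟨f, hf1, -, hfc, hf01⟩ :=
    exists_continuous_one_zero_of_isCompact hK isClosed_empty (by simp)
  have hsupp : HasCompactSupport fun x => (f x : ℂ) * φ x := by
    have h2 : HasCompactSupport fun x => (f x : ℂ) :=
      hfc.comp_left (g := (Complex.ofReal ·)) rfl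
    exact h2.mul_right
  refine ⟨⟨⟨fun x => (f x : ℂ) * φ x,
      (Complex.continuous_ofReal.comp f.continuous).mul φ.continuous⟩,
      hsupp.is_zero_at_infty⟩, hsupp, ?_⟩
  rw [← ZeroAtInftyContinuousMap.norm_toBCF_eq_norm]
  refine (BoundedContinuousFunction.norm_le hε.le).mpr fun x => ?_
  show ‖φ x - (f x : ℂ) * φ x‖ ≤ ε
  have hval : φ x - (f x : ℂ) * φ x = ((1 - f x : ℝ) : ℂ) * φ x := by
    push_cast; ring
  rw [hval, norm_mul, Complex.norm_real]
  by_cases hx : x ∈ K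
  · rw [hf1 hx]; simp [hε.le]
  · have h3 : ‖φ x‖ < ε := hKs hx
    have h4 : |1 - f x| ≤ 1 := by
      have := hf01 x
      rw [abs_le]; constructor <;> [linarith [this.2]; linarith [this.1]]
    calc |1 - f x| * ‖φ x‖ ≤ 1 * ε :=
          mul_le_mul h4 h3.le (norm_nonneg _) zero_le_one
      _ = ε := one_mul ε

lemma eventually_mul_eq_zero
    (hproper : IsProperMap fun p : G × X => (p.1 • p.2, p.2))
    {φ ψ : C₀(X, ℂ)} (hφ : HasCompactSupport ⇑φ) (hψ : HasCompactSupport ⇑ψ) :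
    ∀ᶠ g in cocompact G, C0smul g⁻¹ φ * ψ = 0 := by
  have hC : IsCompact (Prod.fst ''
      ((fun p : G × X => (p.1 • p.2, p.2)) ⁻¹' (tsupport ⇑φ ×ˢ tsupport ⇑ψ))) :=
    (hproper.isCompact_preimage (hφ.prod hψ)).image continuous_fst
  filter_upwards [hC.compl_mem_cocompact] with g hg
  ext x
  show C0smul g⁻¹ φ x * ψ x = 0
  by_cases hx : x ∈ tsupport ⇑ψ
  · have hgx : g • x ∉ tsupport ⇑φ := by
      intro hgx
      exact hg ⟨(g, x), by simp [Set.mem_preimage, hgx, hx], rfl⟩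
    have : C0smul g⁻¹ φ x = 0 := by
      simp only [C0smul_apply, inv_inv]
      exact image_eq_zero_of_notMem_tsupport hgx
    rw [this, zero_mul]
  · rw [image_eq_zero_of_notMem_tsupport hx, mul_zero]

section Rep

variable (π : C₀(X, ℂ) →⋆ₙₐ[ℂ] (H →L[ℂ] H))

lemma norm_pi_apply_le (a : C₀(X, ℂ)) (y : H) : ‖π a y‖ ≤ ‖a‖ * ‖y‖ :=
  le_trans ((π a).le_opNorm y)
    (mul_le_mul_of_nonneg_right (NonUnitalStarAlgHom.norm_apply_le π a) (norm_nonneg y))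

lemma pointwise_tendsto
    (hπnd : Dense (Submodule.span ℂ (Set.range fun p : C₀(X, ℂ) × H => π p.1 p.2) : Set H))
    (hproper : IsProperMap fun p : G × X => (p.1 • p.2, p.2))
    (φ : C₀(X, ℂ)) (y : H) :
    Tendsto (fun g : G => π (C0smul g⁻¹ φ) y) (cocompact G) (𝓝 0) := by
  apply approx_tendsto_zero
  intro ε hε
  obtain ⟨z, hz, hdz⟩ := hπnd.exists_dist_lt y (show (0:ℝ) < ε / (‖φ‖ + 1) by positivity)
  refine ⟨fun g => π (C0smul g⁻¹ φ) z, fun g => ?_, ?_⟩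
  · have h1 : ‖π (C0smul g⁻¹ φ) y - π (C0smul g⁻¹ φ) z‖ ≤ ‖C0smul g⁻¹ φ‖ * ‖y - z‖ := by
      rw [← map_sub]
      exact le_trans ((π _).le_opNorm _)
        (mul_le_mul_of_nonneg_right (NonUnitalStarAlgHom.norm_apply_le π _) (norm_nonneg _))
    have h2 : ‖C0smul g⁻¹ φ‖ * ‖y - z‖ ≤ ‖φ‖ * (ε / (‖φ‖ + 1)) := by
      apply mul_le_mul (norm_C0smul_le _ _) _ (norm_nonneg _) (norm_nonneg _)
      · rw [← dist_eq_norm]; exact hdz.le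
    have h3 : ‖φ‖ * (ε / (‖φ‖ + 1)) ≤ ε := by
      rw [div_eq_inv_mul, ← mul_assoc]
      have hφ1 : (0:ℝ) < ‖φ‖ + 1 := by positivity
      have : ‖φ‖ * (‖φ‖ + 1)⁻¹ ≤ 1 := by
        rw [mul_inv_le_iff₀ hφ1]; linarith
      nlinarith [hε.le]
    linarith
  · clear hdz
    induction hz using Submodule.span_induction with
    | mem w hw =>
        obtain ⟨⟨ψ, v⟩, rfl⟩ := hw
        apply approx_tendsto_zero
        intro δ hδ
        obtain ⟨φ', hφ'c, hφ'⟩ := exists_compactSupport_approx φ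
          (show (0:ℝ) < δ / (‖π ψ v‖ + 1) by positivity)
        refine ⟨fun g => π (C0smul g⁻¹ φ') (π ψ v), fun g => ?_, ?_⟩
        · have h1 : π (C0smul g⁻¹ φ) (π ψ v) - π (C0smul g⁻¹ φ') (π ψ v)
              = π (C0smul g⁻¹ (φ - φ')) (π ψ v) := by
            rw [C0smul_sub, map_sub]; simp
          rw [h1]
          have h2 := norm_pi_apply_le π (C0smul g⁻¹ (φ - φ')) (π ψ v)
          have h3 : ‖C0smul g⁻¹ (φ - φ')‖ ≤ δ / (‖π ψ v‖ + 1) :=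
            le_trans (norm_C0smul_le _ _) hφ'
          have h4 : (0:ℝ) < ‖π ψ v‖ + 1 := by positivity
          have h5 : ‖C0smul g⁻¹ (φ - φ')‖ * ‖π ψ v‖ ≤ (δ / (‖π ψ v‖ + 1)) * (‖π ψ v‖ + 1) := by
            apply mul_le_mul h3 (by linarith) (norm_nonneg _) (by positivity)
          rw [div_mul_cancel₀ _ h4.ne'] at h5
          linarith
        · apply approx_tendsto_zero
          intro δ' hδ'
          obtain ⟨ψ', hψ'c, hψ'⟩ := exists_compactSupport_approx ψ
            (show (0:ℝ) < δ' / ((‖φ'‖ + 1) * (‖v‖ + 1)) by positivity)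
          refine ⟨fun g => π (C0smul g⁻¹ φ') (π ψ' v), fun g => ?_, ?_⟩
          · have h1 : π (C0smul g⁻¹ φ') (π ψ v) - π (C0smul g⁻¹ φ') (π ψ' v)
                = π (C0smul g⁻¹ φ') (π (ψ - ψ') v) := by
              rw [map_sub]; simp
            rw [h1]
            have h2 : ‖π (C0smul g⁻¹ φ') (π (ψ - ψ') v)‖
                ≤ ‖φ'‖ * (‖ψ - ψ'‖ * ‖v‖) := by
              refine le_trans (norm_pi_apply_le π _ _) ?_
              apply mul_le_mul (le_trans (norm_C0smul_le _ _) le_rfl)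
                (norm_pi_apply_le π _ _) (norm_nonneg _) (norm_nonneg _)
            refine le_trans h2 ?_
            have ha : (0:ℝ) ≤ ‖φ'‖ := norm_nonneg _
            have hb : (0:ℝ) ≤ ‖v‖ := norm_nonneg _
            have hs : (0:ℝ) ≤ ‖ψ - ψ'‖ := norm_nonneg _
            have key : ‖ψ - ψ'‖ * ((‖φ'‖ + 1) * (‖v‖ + 1)) ≤ δ' := by
              rw [← le_div_iff₀ (by positivity)]
              exact hψ'
            nlinarith [mul_nonneg hs (by linarith : (0:ℝ) ≤ ‖φ'‖ + ‖v‖ + 1)]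
          · have hev := eventually_mul_eq_zero hproper hφ'c hψ'c
            refine Tendsto.congr' ?_ tendsto_const_nhds
            filter_upwards [hev] with g hg
            have : π (C0smul g⁻¹ φ') (π ψ' v) = π (C0smul g⁻¹ φ' * ψ') v := by
              rw [map_mul]; simp
            rw [this, hg, map_zero]; simp
    | zero => simpa using (tendsto_const_nhds : Tendsto (fun _ : G => (0:H)) _ _)
    | add w₁ w₂ h₁ h₂ ih₁ ih₂ =>
        have := ih₁.add ih₂
        simp only [← map_add] at this ⊢
        simpa using this
    | smul c w hw ih =>
        have := ih.const_smul c
        simp only [_root_.map_smul] at this ⊢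
        simpa using this

lemma norm_conj_eq (u : G →* unitary (H →L[ℂ] H))
    (hcov : ∀ (g : G) (φ : C₀(X, ℂ)),
      (u g : H →L[ℂ] H) * π φ * ((u g⁻¹ : unitary (H →L[ℂ] H)) : H →L[ℂ] H) = π (C0smul g φ))
    (g : G) (T : H →L[ℂ] H) (φ : C₀(X, ℂ)) :
    ‖π φ * conjU u g T‖ = ‖π (C0smul g⁻¹ φ) * T‖ := by
  have h := hcov g⁻¹ φ
  rw [inv_inv] at h
  have hab : (u g : H →L[ℂ] H) * ((u g⁻¹ : unitary (H →L[ℂ] H)) : H →L[ℂ] H) = 1 := by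
    rw [← Submonoid.coe_mul, ← map_mul, mul_inv_cancel, map_one]; rfl
  have key : π φ * conjU u g T
      = (u g : H →L[ℂ] H) * ((π (C0smul g⁻¹ φ) * T) *
          ((u g⁻¹ : unitary (H →L[ℂ] H)) : H →L[ℂ] H)) := by
    rw [← h]
    show π φ * ((u g : H →L[ℂ] H) * T * ((u g⁻¹ : unitary (H →L[ℂ] H)) : H →L[ℂ] H)) = _
    have h2 : (u g : H →L[ℂ] H) *
        ((((u g⁻¹ : unitary (H →L[ℂ] H)) : H →L[ℂ] H) * π φ * (u g : H →L[ℂ] H)) * T *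
          ((u g⁻¹ : unitary (H →L[ℂ] H)) : H →L[ℂ] H))
        = ((u g : H →L[ℂ] H) * ((u g⁻¹ : unitary (H →L[ℂ] H)) : H →L[ℂ] H)) *
          (π φ * ((u g : H →L[ℂ] H) * T *
            ((u g⁻¹ : unitary (H →L[ℂ] H)) : H →L[ℂ] H))) := by noncomm_ring
    rw [h2, hab, one_mul]
  rw [key, CStarRing.norm_coe_unitary_mul, CStarRing.norm_mul_coe_unitary]

end Rep

lemma final_step (A : G → (H →L[ℂ] H)) (M : ℝ) (hM0 : 0 ≤ M) (hbd : ∀ g, ‖A g‖ ≤ M)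
    (hpt : ∀ y : H, Tendsto (fun g => A g y) (cocompact G) (𝓝 0))
    (T : H →L[ℂ] H) (hT : IsCompactOperator (⇑T)) :
    Tendsto (fun g => A g * T) (cocompact G) (𝓝 0) := by
  obtain ⟨K, hK, hKnhds⟩ := hT
  obtain ⟨r, hr, hball⟩ := Metric.mem_nhds_iff.mp hKnhds
  rw [NormedAddCommGroup.tendsto_nhds_zero]
  intro ε hε
  set δ : ℝ := (ε * r / 8) / (M + 1) with hδdef
  have hδ : 0 < δ := by positivity
  obtain ⟨t, htK, hcover⟩ :=
    hK.elim_nhds_subcover (fun y => Metric.ball y δ) (fun y _ => Metric.ball_mem_nhds y hδ)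
  have hev : ∀ᶠ g in cocompact G, ∀ y ∈ t, ‖A g y‖ < ε * r / 8 := by
    rw [Filter.eventually_all_finset]
    intro y _
    exact (NormedAddCommGroup.tendsto_nhds_zero.mp (hpt y)) _ (by positivity)
  filter_upwards [hev] with g hg
  have hKbound : ∀ y ∈ K, ‖A g y‖ ≤ ε * r / 4 := by
    intro y hy
    obtain ⟨i, hit, hyi⟩ := Set.mem_iUnion₂.mp (hcover hy)
    have h1 : ‖A g y - A g i‖ ≤ M * δ := by
      rw [← map_sub]
      calc ‖A g (y - i)‖ ≤ ‖A g‖ * ‖y - i‖ := (A g).le_opNorm _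
        _ ≤ M * δ := by
            apply mul_le_mul (hbd g) _ (norm_nonneg _) hM0
            rw [← dist_eq_norm]; exact (Metric.mem_ball.mp hyi).le
    have h2 : M * δ ≤ ε * r / 8 := by
      rw [hδdef, mul_div_assoc']
      rw [div_le_iff₀ (by positivity : (0:ℝ) < M + 1)]
      nlinarith
    have h3 : ‖A g y‖ ≤ ‖A g y - A g i‖ + ‖A g i‖ := by
      simpa using norm_add_le (A g y - A g i) (A g i)
    have h4 := hg i hit
    linarith
  have hop : ‖A g * T‖ ≤ ε / 2 := by
    apply ContinuousLinearMap.opNorm_le_bound _ (by positivity)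
    intro x
    rcases eq_or_ne x 0 with rfl | hx
    · simp
    · have hxn : (0:ℝ) < ‖x‖ := norm_pos_iff.mpr hx
      set c : ℝ := r / (2 * ‖x‖) with hcdef
      have hc : 0 < c := by positivity
      have hx' : ‖c • x‖ = r / 2 := by
        rw [norm_smul, Real.norm_eq_abs, abs_of_pos hc, hcdef]
        field_simp
      have hmem : T (c • x) ∈ K := by
        apply hball
        rw [Metric.mem_ball, dist_zero_right, hx']
        linarith
      have heq : (A g * T) x = (c⁻¹ : ℝ) • A g (T (c • x)) := by
        rw [T.map_smul_of_tower, (A g).map_smul_of_tower, smul_smul,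
          inv_mul_cancel₀ hc.ne', one_smul]
        rfl
      rw [heq, norm_smul, Real.norm_eq_abs, abs_of_pos (inv_pos.mpr hc)]
      have h5 := hKbound _ hmem
      have h6 : c⁻¹ = 2 * ‖x‖ / r := by
        rw [hcdef]; field_simp
      rw [h6]
      calc 2 * ‖x‖ / r * ‖A g (T (c • x))‖ ≤ 2 * ‖x‖ / r * (ε * r / 4) := by
            apply mul_le_mul_of_nonneg_left h5 (by positivity)
        _ = ε / 2 * ‖x‖ := by field_simp; ring
  calc ‖A g * T‖ ≤ ε / 2 := hop
    _ < ε := by linarith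

theorem statement_0
    (u : G →* unitary (H →L[ℂ] H))
    (hu : ∀ v : H, Continuous fun g : G => (u g : H →L[ℂ] H) v)
    (π : C₀(X, ℂ) →⋆ₙₐ[ℂ] (H →L[ℂ] H))
    (hπnd : Dense (Submodule.span ℂ (Set.range fun p : C₀(X, ℂ) × H => π p.1 p.2) : Set H))
    (hcov : ∀ (g : G) (φ : C₀(X, ℂ)),
      (u g : H →L[ℂ] H) * π φ * ((u g⁻¹ : unitary (H →L[ℂ] H)) : H →L[ℂ] H) = π (C0smul g φ))
    (hproper : IsProperMap fun p : G × X => (p.1 • p.2, p.2))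
    (T : H →L[ℂ] H) (hT : IsCompactOperator (⇑T)) (φ : C₀(X, ℂ)) :
    Tendsto (fun g : G => ‖π φ * conjU u g T‖) (cocompact G) (𝓝 0) := by
  have key : (fun g : G => ‖π φ * conjU u g T‖)
      = fun g : G => ‖π (C0smul g⁻¹ φ) * T‖ :=
    funext fun g => norm_conj_eq π u hcov g T φ
  rw [key]
  exact tendsto_zero_iff_norm_tendsto_zero.mp
    (final_step (fun g => π (C0smul g⁻¹ φ)) ‖φ‖ (norm_nonneg φ)
      (fun g => le_trans (NonUnitalStarAlgHom.norm_apply_le π _) (norm_C0smul_le _ _))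
      (fun y => pointwise_tendsto π hπnd hproper φ y) T hT)

end
end

section
/- Let H be a Hilbert space with a nondegenerate representation π of C₀(X) for a locally compact Hausdorff space X. Let (f_j)_{j∈J} and (f'_j)_{j∈J} be families of real-valued functions in C₀(X), indexed by a set J, such that the sums ∑_{j∈J} π(f_j)² and ∑_{j∈J} π(f'_j)² converge in the strong operator topology (as nets of finite partial sums) to bounded operators B and B' respectively. Then for every family (T_j)_{j∈J} in B(H) with sup_j ‖T_j‖ < ∞, the sum ∑_{j∈J} π(f'_j) T_j π(f_j) converges in the strong operator topology on H to a bounded operator whose norm is at most ‖B'‖^{1/2} ‖B‖^{1/2} · sup_j ‖T_j‖; in particular the norm bound has the form C · sup_j ‖T_j‖ with a constant C > 0 independent of the family (T_j). -/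
open scoped ZeroAtInfty
open Filter Topology

open scoped InnerProductSpace

theorem statement_3
    {X : Type*} [TopologicalSpace X] [LocallyCompactSpace X] [T2Space X]
    {H : Type*} [NormedAddCommGroup H] [InnerProductSpace ℂ H] [CompleteSpace H]
    {J : Type*}
    (π : C₀(X, ℂ) →⋆ₙₐ[ℂ] (H →L[ℂ] H))
    (hπnd : Dense (Submodule.span ℂ (Set.range fun p : C₀(X, ℂ) × H => π p.1 p.2) : Set H))
    (f f' : J → C₀(X, ℂ))
    (hf_real : ∀ (j : J) (x : X), (f j x).im = 0)
    (hf'_real : ∀ (j : J) (x : X), (f' j x).im = 0)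
    (B B' : H →L[ℂ] H)
    (hB : ∀ v : H, HasSum (fun j : J => π (f j) (π (f j) v)) (B v))
    (hB' : ∀ v : H, HasSum (fun j : J => π (f' j) (π (f' j) v)) (B' v)) :
    ∃ C : ℝ, 0 < C ∧
      ∀ T : J → (H →L[ℂ] H), BddAbove (Set.range fun j : J => ‖T j‖) →
        ∃ S : H →L[ℂ] H,
          (∀ v : H, HasSum (fun j : J => π (f' j) ((T j) (π (f j) v))) (S v)) ∧
          ‖S‖ ≤ Real.sqrt ‖B'‖ * Real.sqrt ‖B‖ * (⨆ j : J, ‖T j‖) ∧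
          ‖S‖ ≤ C * ⨆ j : J, ‖T j‖ := by
  classical
  -- self-adjointness of the π (f j) and π (f' j)
  have hadj : ∀ (g : J → C₀(X, ℂ)), (∀ j x, (g j x).im = 0) →
      ∀ (j : J) (x y : H), ⟪π (g j) x, y⟫_ℂ = ⟪x, π (g j) y⟫_ℂ := by
    intro g hr j x y
    have hst : star (g j) = g j := by
      ext z
      exact Complex.conj_eq_iff_im.2 (hr j z)
    have h1 : ContinuousLinearMap.adjoint (π (g j)) = π (g j) := by
      rw [← ContinuousLinearMap.star_eq_adjoint, ← map_star, hst]
    calc ⟪π (g j) x, y⟫_ℂ = ⟪ContinuousLinearMap.adjoint (π (g j)) x, y⟫_ℂ := by rw [h1]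
      _ = ⟪x, π (g j) y⟫_ℂ := ContinuousLinearMap.adjoint_inner_left _ _ _
  -- the sums of squared norms
  have hsq : ∀ (g : J → C₀(X, ℂ)) (hr : ∀ j x, (g j x).im = 0) (Bg : H →L[ℂ] H),
      (∀ v : H, HasSum (fun j : J => π (g j) (π (g j) v)) (Bg v)) →
      ∀ v : H, HasSum (fun j : J => ‖π (g j) v‖ ^ 2) (RCLike.re (K := ℂ) ⟪v, Bg v⟫_ℂ) := by
    intro g hr Bg hBg v
    have h1 := (RCLike.reCLM (K := ℂ)).hasSum ((innerSL ℂ v).hasSum (hBg v))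
    convert h1 using 2 with j
    · rfl
    rw [RCLike.reCLM_apply, innerSL_apply_apply, ← hadj g hr j v (π (g j) v), inner_self_eq_norm_sq]
    rfl
  have hsum_le : ∀ (g : J → C₀(X, ℂ)) (hr : ∀ j x, (g j x).im = 0) (Bg : H →L[ℂ] H),
      (∀ v : H, HasSum (fun j : J => π (g j) (π (g j) v)) (Bg v)) →
      ∀ (v : H) (F : Finset J), ∑ j ∈ F, ‖π (g j) v‖ ^ 2 ≤ ‖Bg‖ * ‖v‖ ^ 2 := by
    intro g hr Bg hBg v F
    refine (sum_le_hasSum F (fun j _ => sq_nonneg _) (hsq g hr Bg hBg v)).trans ?_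
    calc RCLike.re (K := ℂ) ⟪v, Bg v⟫_ℂ ≤ ‖(⟪v, Bg v⟫_ℂ : ℂ)‖ := RCLike.re_le_norm _
      _ ≤ ‖v‖ * ‖Bg v‖ := norm_inner_le_norm _ _
      _ ≤ ‖v‖ * (‖Bg‖ * ‖v‖) :=
          mul_le_mul_of_nonneg_left (Bg.le_opNorm v) (norm_nonneg v)
      _ = ‖Bg‖ * ‖v‖ ^ 2 := by ring
  refine ⟨Real.sqrt ‖B'‖ * Real.sqrt ‖B‖ + 1, by positivity, ?_⟩
  intro T hT
  set M : ℝ := ⨆ j : J, ‖T j‖ with hMdef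
  have hM0 : 0 ≤ M := Real.iSup_nonneg fun j => norm_nonneg _
  have hMj : ∀ j, ‖T j‖ ≤ M := fun j => le_ciSup hT j
  -- the key finite bound
  have key : ∀ (v : H) (F : Finset J),
      ‖∑ j ∈ F, π (f' j) (T j (π (f j) v))‖ ≤
        M * Real.sqrt ‖B'‖ * Real.sqrt (∑ j ∈ F, ‖π (f j) v‖ ^ 2) := by
    intro v F
    set u := ∑ j ∈ F, π (f' j) (T j (π (f j) v)) with hu
    have hrhs0 : 0 ≤ M * Real.sqrt ‖B'‖ * Real.sqrt (∑ j ∈ F, ‖π (f j) v‖ ^ 2) := by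
      positivity
    rcases eq_or_lt_of_le (norm_nonneg u) with h0 | h0
    · rw [← h0]; exact hrhs0
    have h2 : ‖u‖ ^ 2 ≤ M * Real.sqrt ‖B'‖ * Real.sqrt (∑ j ∈ F, ‖π (f j) v‖ ^ 2) * ‖u‖ := by
      have e1 : (‖u‖ : ℝ) ^ 2 = RCLike.re (K := ℂ) ⟪u, u⟫_ℂ := (inner_self_eq_norm_sq u).symm
      have e2 : RCLike.re (K := ℂ) ⟪u, u⟫_ℂ =
          ∑ j ∈ F, RCLike.re (K := ℂ) ⟪π (f' j) u, T j (π (f j) v)⟫_ℂ := by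
        conv_lhs => rw [hu, inner_sum]
        rw [map_sum]
        exact Finset.sum_congr rfl fun j _ => by
          rw [← hadj f' hf'_real j u (T j (π (f j) v))]
      have e3 : ∀ j ∈ F, RCLike.re (K := ℂ) ⟪π (f' j) u, T j (π (f j) v)⟫_ℂ ≤
          ‖π (f' j) u‖ * (M * ‖π (f j) v‖) := by
        intro j _
        calc RCLike.re (K := ℂ) ⟪π (f' j) u, T j (π (f j) v)⟫_ℂ
            ≤ ‖(⟪π (f' j) u, T j (π (f j) v)⟫_ℂ : ℂ)‖ := RCLike.re_le_norm _
          _ ≤ ‖π (f' j) u‖ * ‖T j (π (f j) v)‖ := norm_inner_le_norm _ _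
          _ ≤ ‖π (f' j) u‖ * (M * ‖π (f j) v‖) := by
              refine mul_le_mul_of_nonneg_left ?_ (norm_nonneg _)
              calc ‖T j (π (f j) v)‖ ≤ ‖T j‖ * ‖π (f j) v‖ := (T j).le_opNorm _
                _ ≤ M * ‖π (f j) v‖ :=
                    mul_le_mul_of_nonneg_right (hMj j) (norm_nonneg _)
      have e4 : ∑ j ∈ F, ‖π (f' j) u‖ * ‖π (f j) v‖ ≤
          Real.sqrt (∑ j ∈ F, ‖π (f' j) u‖ ^ 2) * Real.sqrt (∑ j ∈ F, ‖π (f j) v‖ ^ 2) := by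
        rw [← Real.sqrt_mul (by positivity)]
        refine (Real.le_sqrt (by positivity) (by positivity)).2 ?_
        exact Finset.sum_mul_sq_le_sq_mul_sq F _ _
      have e5 : Real.sqrt (∑ j ∈ F, ‖π (f' j) u‖ ^ 2) ≤ Real.sqrt ‖B'‖ * ‖u‖ := by
        have := hsum_le f' hf'_real B' hB' u F
        calc Real.sqrt (∑ j ∈ F, ‖π (f' j) u‖ ^ 2) ≤ Real.sqrt (‖B'‖ * ‖u‖ ^ 2) :=
            Real.sqrt_le_sqrt this
          _ = Real.sqrt ‖B'‖ * ‖u‖ := by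
            rw [Real.sqrt_mul (norm_nonneg _), Real.sqrt_sq (norm_nonneg _)]
      calc ‖u‖ ^ 2 = ∑ j ∈ F, RCLike.re (K := ℂ) ⟪π (f' j) u, T j (π (f j) v)⟫_ℂ := by
            rw [e1, e2]
        _ ≤ ∑ j ∈ F, ‖π (f' j) u‖ * (M * ‖π (f j) v‖) := Finset.sum_le_sum e3
        _ = M * ∑ j ∈ F, ‖π (f' j) u‖ * ‖π (f j) v‖ := by
            rw [Finset.mul_sum]; exact Finset.sum_congr rfl fun j _ => by ring
        _ ≤ M * (Real.sqrt (∑ j ∈ F, ‖π (f' j) u‖ ^ 2) *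
              Real.sqrt (∑ j ∈ F, ‖π (f j) v‖ ^ 2)) :=
            mul_le_mul_of_nonneg_left e4 hM0
        _ ≤ M * ((Real.sqrt ‖B'‖ * ‖u‖) * Real.sqrt (∑ j ∈ F, ‖π (f j) v‖ ^ 2)) := by
            refine mul_le_mul_of_nonneg_left
              (mul_le_mul_of_nonneg_right e5 (Real.sqrt_nonneg _)) hM0
        _ = M * Real.sqrt ‖B'‖ * Real.sqrt (∑ j ∈ F, ‖π (f j) v‖ ^ 2) * ‖u‖ := by ring
    have := le_of_mul_le_mul_right (by calc ‖u‖ * ‖u‖ = ‖u‖ ^ 2 := (sq ‖u‖).symm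
      _ ≤ _ := h2) h0
    exact this
  -- summability
  have hsummable : ∀ v : H, Summable (fun j : J => π (f' j) (T j (π (f j) v))) := by
    intro v
    rw [summable_iff_vanishing]
    intro e he
    obtain ⟨ε, hε, hball⟩ := Metric.mem_nhds_iff.1 he
    set c : ℝ := M * Real.sqrt ‖B'‖ with hc
    have hc0 : 0 ≤ c := by positivity
    have hsa : Summable (fun j : J => ‖π (f j) v‖ ^ 2) :=
      (hsq f hf_real B hB v).summable
    obtain ⟨s, hs⟩ := summable_iff_vanishing.1 hsa (Metric.ball 0 ((ε / (c + 1)) ^ 2))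
      (Metric.ball_mem_nhds _ (by positivity))
    refine ⟨s, fun t ht => hball ?_⟩
    have h2 := hs t ht
    rw [Metric.mem_ball, dist_zero_right, Real.norm_eq_abs] at h2
    rw [Metric.mem_ball, dist_zero_right]
    calc ‖∑ j ∈ t, π (f' j) (T j (π (f j) v))‖
        ≤ c * Real.sqrt (∑ j ∈ t, ‖π (f j) v‖ ^ 2) := key v t
      _ ≤ c * Real.sqrt ((ε / (c + 1)) ^ 2) := by
          refine mul_le_mul_of_nonneg_left (Real.sqrt_le_sqrt ?_) hc0
          exact (le_abs_self _).trans h2.le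
      _ = c * (ε / (c + 1)) := by rw [Real.sqrt_sq (by positivity)]
      _ = ε * (c / (c + 1)) := by ring
      _ < ε * 1 := by
          refine mul_lt_mul_of_pos_left ?_ hε
          exact (div_lt_one (by positivity)).2 (lt_add_one c)
      _ = ε := mul_one ε
  have hhs : ∀ v : H, HasSum (fun j : J => π (f' j) (T j (π (f j) v)))
      (∑' j : J, π (f' j) (T j (π (f j) v))) := fun v => (hsummable v).hasSum
  -- the linear map
  let L : H →ₗ[ℂ] H :=
    { toFun := fun v => ∑' j : J, π (f' j) (T j (π (f j) v))
      map_add' := by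
        intro v w
        have : HasSum (fun j : J => π (f' j) (T j (π (f j) (v + w))))
            ((∑' j : J, π (f' j) (T j (π (f j) v))) +
              ∑' j : J, π (f' j) (T j (π (f j) w))) := by
          simpa [map_add] using (hhs v).add (hhs w)
        exact this.tsum_eq
      map_smul' := by
        intro c v
        have : HasSum (fun j : J => π (f' j) (T j (π (f j) (c • v))))
            (c • ∑' j : J, π (f' j) (T j (π (f j) v))) := by
          simpa [map_smul] using (hhs v).const_smul c
        exact this.tsum_eq }
  have hLbound : ∀ v : H, ‖L v‖ ≤ M * Real.sqrt ‖B'‖ * Real.sqrt ‖B‖ * ‖v‖ := by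
    intro v
    refine le_of_tendsto' (Filter.Tendsto.norm (hhs v)) ?_
    intro F
    calc ‖∑ j ∈ F, π (f' j) (T j (π (f j) v))‖
        ≤ M * Real.sqrt ‖B'‖ * Real.sqrt (∑ j ∈ F, ‖π (f j) v‖ ^ 2) := key v F
      _ ≤ M * Real.sqrt ‖B'‖ * Real.sqrt (‖B‖ * ‖v‖ ^ 2) := by
          refine mul_le_mul_of_nonneg_left
            (Real.sqrt_le_sqrt (hsum_le f hf_real B hB v F)) (by positivity)
      _ = M * Real.sqrt ‖B'‖ * Real.sqrt ‖B‖ * ‖v‖ := by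
          rw [Real.sqrt_mul (norm_nonneg _), Real.sqrt_sq (norm_nonneg _)]; ring
  refine ⟨LinearMap.mkContinuous L (M * Real.sqrt ‖B'‖ * Real.sqrt ‖B‖) hLbound, ?_, ?_, ?_⟩
  · intro v
    exact hhs v
  · have := LinearMap.mkContinuous_norm_le L (by positivity :
      (0:ℝ) ≤ M * Real.sqrt ‖B'‖ * Real.sqrt ‖B‖) hLbound
    calc ‖LinearMap.mkContinuous L (M * Real.sqrt ‖B'‖ * Real.sqrt ‖B‖) hLbound‖
        ≤ M * Real.sqrt ‖B'‖ * Real.sqrt ‖B‖ := this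
      _ = Real.sqrt ‖B'‖ * Real.sqrt ‖B‖ * M := by ring
  · have := LinearMap.mkContinuous_norm_le L (by positivity :
      (0:ℝ) ≤ M * Real.sqrt ‖B'‖ * Real.sqrt ‖B‖) hLbound
    have h1 : M * Real.sqrt ‖B'‖ * Real.sqrt ‖B‖ ≤
        (Real.sqrt ‖B'‖ * Real.sqrt ‖B‖ + 1) * M := by nlinarith [Real.sqrt_nonneg ‖B'‖, Real.sqrt_nonneg ‖B‖]
    exact this.trans h1
end

section
/- Let X be a locally compact Hausdorff space with a continuous proper G-action, let π : C₀(X) → B(H) be a nondegenerate covariant representation on the G-Hilbert space H, and let T ∈ B(H) be such that 1 − T² is a compact operator. Then for every φ ∈ C₀(X) the map g ↦ π(φ)(1 − (u_g T u_g⁻¹)²) belongs to C₀(G, K(H)). -/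
open scoped ZeroAtInfty
open Filter MeasureTheory Topology

noncomputable section

variable {G : Type*} [Group G] [TopologicalSpace G] [IsTopologicalGroup G]
  [LocallyCompactSpace G] [SecondCountableTopology G] [T2Space G]
variable {X : Type*} [TopologicalSpace X] [LocallyCompactSpace X] [T2Space X]
variable [MulAction G X] [ContinuousSMul G X]
variable {H : Type*} [NormedAddCommGroup H] [InnerProductSpace ℂ H] [CompleteSpace H]
  [SecondCountableTopology H]

/-! ### Auxiliary lemmas -/

section AuxLemmas

/-- A pointwise norm bound gives a norm bound for a `C₀` function. -/
lemma c0_norm_le {f : C₀(X, ℂ)} {M : ℝ} (hM : 0 ≤ M) (h : ∀ x, ‖f x‖ ≤ M) : ‖f‖ ≤ M := by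
  have : ∀ x, ‖f.toBCF x‖ ≤ M := fun x => h x
  exact (BoundedContinuousFunction.norm_le hM).2 this

/-- Bounding the operator norm of a composition `D * C` by bounding `D` on the image of the
closed unit ball under `C`. -/
lemma opNorm_comp_le_of_ball {D C : H →L[ℂ] H} {M : ℝ} (hM : 0 ≤ M)
    (h : ∀ v ∈ ⇑C '' Metric.closedBall (0 : H) 1, ‖D v‖ ≤ M) : ‖D * C‖ ≤ M := by
  apply ContinuousLinearMap.opNorm_le_bound _ hM
  intro x
  rcases eq_or_ne x 0 with rfl | hx
  · simp
  · have hc : (0 : ℝ) < ‖x‖ := norm_pos_iff.2 hx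
    set c : ℂ := ((‖x‖ : ℂ))⁻¹ with hcdef
    have hnc : ‖c‖ = ‖x‖⁻¹ := by
      rw [hcdef, norm_inv, Complex.norm_real, Real.norm_eq_abs, abs_of_pos hc]
    have hmem : c • x ∈ Metric.closedBall (0 : H) 1 := by
      rw [Metric.mem_closedBall, dist_zero_right, norm_smul, hnc]
      rw [inv_mul_cancel₀ hc.ne']
    have h1 : ‖D (C (c • x))‖ ≤ M := h _ ⟨c • x, hmem, rfl⟩
    have h2 : ‖D (C (c • x))‖ = ‖x‖⁻¹ * ‖D (C x)‖ := by
      rw [_root_.map_smul, _root_.map_smul, norm_smul, hnc]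
    rw [h2] at h1
    rw [ContinuousLinearMap.mul_apply]
    have := mul_le_mul_of_nonneg_left h1 hc.le
    rw [← mul_assoc, mul_inv_cancel₀ hc.ne', one_mul] at this
    calc ‖D (C x)‖ ≤ ‖x‖ * M := this
    _ = M * ‖x‖ := mul_comm _ _

/-- Schauder's theorem in Hilbert space: the adjoint of a compact operator is compact. -/
lemma isCompactOperator_star {K : H →L[ℂ] H} (hK : IsCompactOperator ⇑K) :
    IsCompactOperator ⇑(star K) := by
  apply (isCompactOperator_iff_isCompact_closure_image_closedBall
    (star K).toLinearMap one_pos).2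
  apply TotallyBounded.isCompact_of_isClosed ?_ isClosed_closure
  apply TotallyBounded.closure
  rw [Metric.totallyBounded_iff]
  intro ε hε
  have hKA : IsCompactOperator ⇑(K ∘L star K) := by
    have := hK.comp_clm (star K)
    simpa [ContinuousLinearMap.coe_comp'] using this
  have htb : TotallyBounded (⇑(K ∘L star K) '' Metric.closedBall 0 1) :=
    (hKA.isCompact_closure_image_closedBall 1).totallyBounded.subset subset_closure
  obtain ⟨t, htf, hcov⟩ := Metric.totallyBounded_iff.1 htb (ε ^ 2 / 4) (by positivity)
  have hch : ∀ y : H, ∃ x : H,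
      (∃ x' ∈ Metric.closedBall (0 : H) 1, dist (K ((star K) x')) y < ε ^ 2 / 4) →
      (x ∈ Metric.closedBall (0 : H) 1 ∧ dist (K ((star K) x)) y < ε ^ 2 / 4) := by
    intro y
    by_cases hy : ∃ x' ∈ Metric.closedBall (0 : H) 1, dist (K ((star K) x')) y < ε ^ 2 / 4
    · obtain ⟨x', h1, h2⟩ := hy; exact ⟨x', fun _ => ⟨h1, h2⟩⟩
    · exact ⟨0, fun hc => absurd hc hy⟩
  choose ξ hξ using hch
  refine ⟨(fun y => (star K) (ξ y)) '' t, htf.image _, ?_⟩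
  rintro v ⟨x, hx, rfl⟩
  have hx1 : ‖x‖ ≤ 1 := mem_closedBall_zero_iff.1 hx
  have hmem : K ((star K) x) ∈ ⋃ y ∈ t, Metric.ball y (ε ^ 2 / 4) := by
    apply hcov
    exact ⟨x, hx, rfl⟩
  rw [Set.mem_iUnion₂] at hmem
  obtain ⟨y, hyt, hy⟩ := hmem
  rw [Metric.mem_ball] at hy
  obtain ⟨hξ1, hξ2⟩ := hξ y ⟨x, hx, hy⟩
  rw [Set.mem_iUnion₂]
  refine ⟨(star K) (ξ y), Set.mem_image_of_mem _ hyt, ?_⟩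
  rw [Metric.mem_ball, dist_eq_norm]
  have hξ1' : ‖ξ y‖ ≤ 1 := mem_closedBall_zero_iff.1 hξ1
  set w := x - ξ y with hwdef
  have hw : ‖w‖ ≤ 2 := by
    calc ‖x - ξ y‖ ≤ ‖x‖ + ‖ξ y‖ := norm_sub_le _ _
    _ ≤ 2 := by linarith
  have hsq : ‖(star K) w‖ ^ 2 = RCLike.re (inner ℂ w (K ((star K) w)) : ℂ) := by
    rw [← inner_self_eq_norm_sq (𝕜 := ℂ)]
    congr 1
    rw [ContinuousLinearMap.star_eq_adjoint]
    exact ContinuousLinearMap.adjoint_inner_left K ((ContinuousLinearMap.adjoint K) w) w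
  have hKw : ‖K ((star K) w)‖ < ε ^ 2 / 2 := by
    have heq : K ((star K) w) = K ((star K) x) - K ((star K) (ξ y)) := by
      rw [hwdef, map_sub, map_sub]
    rw [heq]
    have d1 : dist (K ((star K) x)) y < ε ^ 2 / 4 := hy
    have d2 : dist y (K ((star K) (ξ y))) < ε ^ 2 / 4 := by
      rw [dist_comm]; exact hξ2
    calc ‖K ((star K) x) - K ((star K) (ξ y))‖
        = dist (K ((star K) x)) (K ((star K) (ξ y))) := (dist_eq_norm _ _).symm
    _ ≤ dist (K ((star K) x)) y + dist y (K ((star K) (ξ y))) := dist_triangle _ _ _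
    _ < ε ^ 2 / 2 := by linarith
  have hre : RCLike.re (inner ℂ w (K ((star K) w)) : ℂ) ≤ ‖w‖ * ‖K ((star K) w)‖ :=
    le_trans (RCLike.re_le_norm _) (norm_inner_le_norm _ _)
  have hlt : ‖(star K) w‖ ^ 2 < ε ^ 2 := by
    rw [hsq]
    nlinarith [norm_nonneg (K ((star K) w)), norm_nonneg w]
  have : ‖(star K) w‖ < ε := lt_of_pow_lt_pow_left₀ 2 hε.le hlt
  calc ‖(star K) x - (star K) (ξ y)‖ = ‖(star K) w‖ := by rw [hwdef, map_sub]
  _ < ε := this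

variable (u : G →* unitary (H →L[ℂ] H))

lemma norm_u_le (g : G) : ‖(u g : H →L[ℂ] H)‖ ≤ 1 :=
  ContinuousLinearMap.opNorm_le_bound _ zero_le_one fun x => by
    rw [Unitary.norm_map, one_mul]

lemma u_mul_inv_cancel (g : G) :
    (u g : H →L[ℂ] H) * ((u g⁻¹ : unitary (H →L[ℂ] H)) : H →L[ℂ] H) = 1 := by
  rw [← MulMemClass.coe_mul, ← map_mul, mul_inv_cancel, map_one, OneMemClass.coe_one]

lemma u_inv_mul_cancel (g : G) :
    ((u g⁻¹ : unitary (H →L[ℂ] H)) : H →L[ℂ] H) * (u g : H →L[ℂ] H) = 1 := by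
  rw [← MulMemClass.coe_mul, ← map_mul, inv_mul_cancel, map_one, OneMemClass.coe_one]

lemma star_u (g : G) :
    star ((u g : H →L[ℂ] H)) = ((u g⁻¹ : unitary (H →L[ℂ] H)) : H →L[ℂ] H) := by
  rw [← Unitary.coe_star]
  congr 1
  rw [Unitary.star_eq_inv]
  exact (map_inv u g).symm

lemma norm_conj_le (g : G) (Z : H →L[ℂ] H) :
    ‖(u g : H →L[ℂ] H) * Z * ((u g⁻¹ : unitary (H →L[ℂ] H)) : H →L[ℂ] H)‖ ≤ ‖Z‖ := by
  calc ‖(u g : H →L[ℂ] H) * Z * ((u g⁻¹ : unitary (H →L[ℂ] H)) : H →L[ℂ] H)‖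
      ≤ ‖(u g : H →L[ℂ] H) * Z‖ * ‖((u g⁻¹ : unitary (H →L[ℂ] H)) : H →L[ℂ] H)‖ :=
        norm_mul_le _ _
  _ ≤ (‖(u g : H →L[ℂ] H)‖ * ‖Z‖) * 1 := by
      apply mul_le_mul (norm_mul_le _ _) (norm_u_le u g⁻¹) (norm_nonneg _)
      positivity
  _ ≤ (1 * ‖Z‖) * 1 := by
      have := norm_u_le u g
      have := norm_nonneg Z
      nlinarith
  _ = ‖Z‖ := by ring

lemma continuous_u_mul_compact
    (hu : ∀ v : H, Continuous fun g : G => (u g : H →L[ℂ] H) v)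
    {C : H →L[ℂ] H} (hC : IsCompactOperator ⇑C) :
    Continuous fun g : G => (u g : H →L[ℂ] H) * C := by
  rw [continuous_iff_continuousAt]
  intro g₀
  rw [ContinuousAt, Metric.tendsto_nhds]
  intro ε hε
  set S := closure (⇑C '' Metric.closedBall (0 : H) 1) with hSdef
  have hScomp : IsCompact S := hC.isCompact_closure_image_closedBall 1
  obtain ⟨t, htf, hcov⟩ := Metric.totallyBounded_iff.1 hScomp.totallyBounded (ε / 8)
    (by positivity)
  have hev : ∀ᶠ g in 𝓝 g₀, ∀ y ∈ t, ‖(u g : H →L[ℂ] H) y - (u g₀ : H →L[ℂ] H) y‖ < ε / 8 := by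
    rw [eventually_all_finite htf]
    intro y _
    have hcont : Continuous fun g : G => ‖(u g : H →L[ℂ] H) y - (u g₀ : H →L[ℂ] H) y‖ :=
      ((hu y).sub continuous_const).norm
    have h0 : Tendsto (fun g : G => ‖(u g : H →L[ℂ] H) y - (u g₀ : H →L[ℂ] H) y‖) (𝓝 g₀)
        (𝓝 0) := by
      have := hcont.tendsto g₀
      simpa using this
    exact h0.eventually_lt_const (by positivity)
  filter_upwards [hev] with g hg
  rw [dist_eq_norm]
  have hsub : (u g : H →L[ℂ] H) * C - (u g₀ : H →L[ℂ] H) * C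
      = ((u g : H →L[ℂ] H) - (u g₀ : H →L[ℂ] H)) * C := (sub_mul _ _ _).symm
  rw [hsub]
  have hb : ∀ v ∈ ⇑C '' Metric.closedBall (0 : H) 1,
      ‖((u g : H →L[ℂ] H) - (u g₀ : H →L[ℂ] H)) v‖ ≤ ε / 2 := by
    intro v hv
    have hvS : v ∈ S := subset_closure hv
    obtain ⟨y, hyt, hyv⟩ := Set.mem_iUnion₂.1 (hcov hvS)
    rw [Metric.mem_ball, dist_eq_norm] at hyv
    have h1 : ‖(u g : H →L[ℂ] H) v - (u g : H →L[ℂ] H) y‖ = ‖v - y‖ := by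
      rw [← map_sub, Unitary.norm_map]
    have h3 : ‖(u g₀ : H →L[ℂ] H) y - (u g₀ : H →L[ℂ] H) v‖ = ‖v - y‖ := by
      rw [← map_sub, Unitary.norm_map, norm_sub_rev]
    have h2 : ‖(u g : H →L[ℂ] H) y - (u g₀ : H →L[ℂ] H) y‖ < ε / 8 := hg y hyt
    rw [ContinuousLinearMap.sub_apply]
    calc ‖(u g : H →L[ℂ] H) v - (u g₀ : H →L[ℂ] H) v‖
        ≤ ‖(u g : H →L[ℂ] H) v - (u g : H →L[ℂ] H) y‖
          + ‖(u g : H →L[ℂ] H) y - (u g₀ : H →L[ℂ] H) y‖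
          + ‖(u g₀ : H →L[ℂ] H) y - (u g₀ : H →L[ℂ] H) v‖ := by
            have := norm_sub_le_norm_sub_add_norm_sub ((u g : H →L[ℂ] H) v)
              ((u g : H →L[ℂ] H) y) ((u g₀ : H →L[ℂ] H) v)
            calc ‖(u g : H →L[ℂ] H) v - (u g₀ : H →L[ℂ] H) v‖
                ≤ ‖(u g : H →L[ℂ] H) v - (u g : H →L[ℂ] H) y‖
                  + ‖(u g : H →L[ℂ] H) y - (u g₀ : H →L[ℂ] H) v‖ := by
                  have := dist_triangle ((u g : H →L[ℂ] H) v) ((u g : H →L[ℂ] H) y)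
                    ((u g₀ : H →L[ℂ] H) v)
                  simpa [dist_eq_norm] using this
            _ ≤ _ := by
                  have := dist_triangle ((u g : H →L[ℂ] H) y) ((u g₀ : H →L[ℂ] H) y)
                    ((u g₀ : H →L[ℂ] H) v)
                  have h4 : ‖(u g : H →L[ℂ] H) y - (u g₀ : H →L[ℂ] H) v‖
                      ≤ ‖(u g : H →L[ℂ] H) y - (u g₀ : H →L[ℂ] H) y‖
                        + ‖(u g₀ : H →L[ℂ] H) y - (u g₀ : H →L[ℂ] H) v‖ := by
                    simpa [dist_eq_norm] using this
                  linarith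
    _ ≤ ε / 2 := by rw [h1, h3]; linarith
  have hle := opNorm_comp_le_of_ball (le_of_lt (half_pos hε)) hb
  linarith

lemma continuous_conj_compact
    (hu : ∀ v : H, Continuous fun g : G => (u g : H →L[ℂ] H) v)
    {K : H →L[ℂ] H} (hK : IsCompactOperator ⇑K) :
    Continuous fun g : G =>
      (u g : H →L[ℂ] H) * K * ((u g⁻¹ : unitary (H →L[ℂ] H)) : H →L[ℂ] H) := by
  rw [continuous_iff_continuousAt]
  intro g₀
  rw [ContinuousAt, tendsto_iff_norm_sub_tendsto_zero]
  have hb : ∀ g : G,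
      ‖(u g : H →L[ℂ] H) * K * ((u g⁻¹ : unitary (H →L[ℂ] H)) : H →L[ℂ] H)
        - (u g₀ : H →L[ℂ] H) * K * ((u g₀⁻¹ : unitary (H →L[ℂ] H)) : H →L[ℂ] H)‖
      ≤ ‖(u g : H →L[ℂ] H) * K - (u g₀ : H →L[ℂ] H) * K‖
        + ‖(u g : H →L[ℂ] H) * star K - (u g₀ : H →L[ℂ] H) * star K‖ := by
    intro g
    set A := (u g : H →L[ℂ] H)
    set A₀ := (u g₀ : H →L[ℂ] H)
    set B := ((u g⁻¹ : unitary (H →L[ℂ] H)) : H →L[ℂ] H)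
    set B₀ := ((u g₀⁻¹ : unitary (H →L[ℂ] H)) : H →L[ℂ] H)
    have hsplit : A * K * B - A₀ * K * B₀
        = ((A - A₀) * K) * B + A₀ * (K * B - K * B₀) := by noncomm_ring
    have hn1 : ‖((A - A₀) * K) * B‖ ≤ ‖A * K - A₀ * K‖ := by
      calc ‖((A - A₀) * K) * B‖ ≤ ‖(A - A₀) * K‖ * ‖B‖ := norm_mul_le _ _
      _ ≤ ‖(A - A₀) * K‖ * 1 := by
          have := norm_u_le u g⁻¹
          have := norm_nonneg ((A - A₀) * K)
          nlinarith
      _ = ‖A * K - A₀ * K‖ := by rw [mul_one, sub_mul]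
    have hn2 : ‖A₀ * (K * B - K * B₀)‖ ≤ ‖A * star K - A₀ * star K‖ := by
      have hstar : star (K * B - K * B₀) = (A - A₀) * star K := by
        rw [star_sub, star_mul, star_mul]
        have hB : star B = A := by
          have := star_u u g⁻¹
          rw [inv_inv] at this
          exact this
        have hB₀ : star B₀ = A₀ := by
          have := star_u u g₀⁻¹
          rw [inv_inv] at this
          exact this
        rw [hB, hB₀, sub_mul]
      calc ‖A₀ * (K * B - K * B₀)‖ ≤ ‖A₀‖ * ‖K * B - K * B₀‖ := norm_mul_le _ _
      _ ≤ 1 * ‖K * B - K * B₀‖ := by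
          have := norm_u_le u g₀
          have := norm_nonneg (K * B - K * B₀)
          nlinarith
      _ = ‖star (K * B - K * B₀)‖ := by rw [one_mul, norm_star]
      _ = ‖A * star K - A₀ * star K‖ := by rw [hstar, sub_mul]
    calc ‖A * K * B - A₀ * K * B₀‖
        = ‖((A - A₀) * K) * B + A₀ * (K * B - K * B₀)‖ := by rw [hsplit]
    _ ≤ ‖((A - A₀) * K) * B‖ + ‖A₀ * (K * B - K * B₀)‖ := norm_add_le _ _
    _ ≤ _ := add_le_add hn1 hn2
  have ht1 : Tendsto (fun g : G => ‖(u g : H →L[ℂ] H) * K - (u g₀ : H →L[ℂ] H) * K‖) (𝓝 g₀)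
      (𝓝 0) := by
    have := (continuous_u_mul_compact u hu hK).tendsto g₀
    exact tendsto_iff_norm_sub_tendsto_zero.1 this
  have ht2 : Tendsto (fun g : G =>
      ‖(u g : H →L[ℂ] H) * star K - (u g₀ : H →L[ℂ] H) * star K‖) (𝓝 g₀) (𝓝 0) := by
    have := (continuous_u_mul_compact u hu (isCompactOperator_star hK)).tendsto g₀
    exact tendsto_iff_norm_sub_tendsto_zero.1 this
  have hsum : Tendsto (fun g : G =>
      ‖(u g : H →L[ℂ] H) * K - (u g₀ : H →L[ℂ] H) * K‖
        + ‖(u g : H →L[ℂ] H) * star K - (u g₀ : H →L[ℂ] H) * star K‖) (𝓝 g₀) (𝓝 0) := by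
    have := ht1.add ht2
    simpa using this
  exact squeeze_zero (fun g => norm_nonneg _) hb hsum

/-- The set where a `C₀` function has norm at least `δ > 0` is compact. -/
lemma isCompact_norm_ge (φ : C₀(X, ℂ)) {δ : ℝ} (hδ : 0 < δ) :
    IsCompact {x : X | δ ≤ ‖φ x‖} := by
  have hclosed : IsClosed {x : X | δ ≤ ‖φ x‖} :=
    isClosed_le continuous_const (continuous_norm.comp φ.continuous)
  have hz : Tendsto ⇑φ (cocompact X) (𝓝 0) := zero_at_infty φ
  have hmem : {x : X | ‖φ x‖ < δ} ∈ cocompact X := by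
    have h1 : Metric.ball (0 : ℂ) δ ∈ 𝓝 (0 : ℂ) := Metric.ball_mem_nhds 0 hδ
    have h2 := hz h1
    have h3 : {x : X | ‖φ x‖ < δ} = ⇑φ ⁻¹' Metric.ball 0 δ :=
      Set.ext fun x => by rw [Set.mem_setOf_eq, Set.mem_preimage, Metric.mem_ball,
        dist_zero_right]
    rw [h3]
    exact h2
  obtain ⟨S, hScomp, hS⟩ := mem_cocompact.1 hmem
  apply hScomp.of_isClosed_subset hclosed
  intro x hx
  have hx' : δ ≤ ‖φ x‖ := hx
  by_contra hxS
  have hlt : ‖φ x‖ < δ := hS hxS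
  exact absurd hx' (not_le.2 hlt)

variable (π : C₀(X, ℂ) →⋆ₙₐ[ℂ] (H →L[ℂ] H))

lemma pi_norm_le (ψ : C₀(X, ℂ)) (hψ : ∀ x, ‖ψ x‖ ≤ 1) (v : H) : ‖π ψ v‖ ≤ ‖v‖ := by
  have hψn : ‖ψ‖ ≤ 1 := c0_norm_le zero_le_one hψ
  have h1 : ‖π ψ‖ ≤ 1 := le_trans (NonUnitalStarAlgHom.norm_apply_le π ψ) hψn
  calc ‖π ψ v‖ ≤ ‖π ψ‖ * ‖v‖ := (π ψ).le_opNorm v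
  _ ≤ 1 * ‖v‖ := mul_le_mul_of_nonneg_right h1 (norm_nonneg v)
  _ = ‖v‖ := one_mul _

lemma mem_goodSet_all
    (hπnd : Dense (Submodule.span ℂ (Set.range fun p : C₀(X, ℂ) × H => π p.1 p.2) : Set H))
    (w : H) : ∀ ε : ℝ, 0 < ε →
    ∃ L : Set X, IsCompact L ∧ ∀ ψ : C₀(X, ℂ), (∀ x, ‖ψ x‖ ≤ 1) → (∀ x ∈ L, ψ x = 1) →
      ‖π ψ w - w‖ ≤ ε := by
  set D : Set H := {w | ∀ ε : ℝ, 0 < ε →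
    ∃ L : Set X, IsCompact L ∧ ∀ ψ : C₀(X, ℂ), (∀ x, ‖ψ x‖ ≤ 1) → (∀ x ∈ L, ψ x = 1) →
      ‖π ψ w - w‖ ≤ ε} with hDdef
  have hgen : ∀ (φ₀ : C₀(X, ℂ)) (h : H), π φ₀ h ∈ D := by
    intro φ₀ h ε hε
    set δ := ε / (2 * (‖h‖ + 1)) with hδdef
    have hδpos : 0 < δ := by positivity
    refine ⟨{x : X | δ ≤ ‖φ₀ x‖}, isCompact_norm_ge φ₀ hδpos, ?_⟩
    intro ψ hψ1 hψL
    have heq : π ψ (π φ₀ h) - π φ₀ h = π (ψ * φ₀ - φ₀) h := by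
      rw [map_sub, map_mul]
      simp [ContinuousLinearMap.sub_apply, ContinuousLinearMap.mul_apply]
    rw [heq]
    have hnorm : ‖ψ * φ₀ - φ₀‖ ≤ 2 * δ := by
      apply c0_norm_le (by positivity)
      intro x
      have hval : (ψ * φ₀ - φ₀) x = (ψ x - 1) * φ₀ x := by
        simp [sub_mul]
      rw [hval]
      rcases le_or_gt δ ‖φ₀ x‖ with hx | hx
      · rw [hψL x hx]
        simp
        positivity
      · calc ‖(ψ x - 1) * φ₀ x‖ = ‖ψ x - 1‖ * ‖φ₀ x‖ := norm_mul _ _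
        _ ≤ 2 * δ := by
            have h1 : ‖ψ x - 1‖ ≤ 2 := by
              calc ‖ψ x - 1‖ ≤ ‖ψ x‖ + ‖(1 : ℂ)‖ := norm_sub_le _ _
              _ ≤ 2 := by
                  have := hψ1 x
                  simp only [norm_one]
                  linarith
            have := norm_nonneg (ψ x - 1)
            nlinarith
    calc ‖π (ψ * φ₀ - φ₀) h‖ ≤ ‖π (ψ * φ₀ - φ₀)‖ * ‖h‖ := (π _).le_opNorm h
    _ ≤ ‖ψ * φ₀ - φ₀‖ * ‖h‖ :=
        mul_le_mul_of_nonneg_right (NonUnitalStarAlgHom.norm_apply_le π _) (norm_nonneg h)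
    _ ≤ (2 * δ) * ‖h‖ := mul_le_mul_of_nonneg_right hnorm (norm_nonneg h)
    _ ≤ ε := by
        have hh : (0 : ℝ) ≤ ‖h‖ := norm_nonneg h
        have hδe : δ * (2 * (‖h‖ + 1)) = ε := by
          rw [hδdef]; field_simp
        nlinarith [hδpos.le]
  have hzero : (0 : H) ∈ D := by
    intro ε hε
    exact ⟨∅, isCompact_empty, fun ψ _ _ => by simp [hε.le]⟩
  have hadd : ∀ w₁ w₂ : H, w₁ ∈ D → w₂ ∈ D → w₁ + w₂ ∈ D := by
    intro w₁ w₂ h₁ h₂ ε hε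
    obtain ⟨L₁, hL₁, hs₁⟩ := h₁ (ε / 2) (by positivity)
    obtain ⟨L₂, hL₂, hs₂⟩ := h₂ (ε / 2) (by positivity)
    refine ⟨L₁ ∪ L₂, hL₁.union hL₂, ?_⟩
    intro ψ hψ1 hψL
    have e1 := hs₁ ψ hψ1 (fun x hx => hψL x (Set.mem_union_left _ hx))
    have e2 := hs₂ ψ hψ1 (fun x hx => hψL x (Set.mem_union_right _ hx))
    have heq : π ψ (w₁ + w₂) - (w₁ + w₂) = (π ψ w₁ - w₁) + (π ψ w₂ - w₂) := by
      rw [map_add]; abel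
    rw [heq]
    calc ‖(π ψ w₁ - w₁) + (π ψ w₂ - w₂)‖ ≤ ‖π ψ w₁ - w₁‖ + ‖π ψ w₂ - w₂‖ := norm_add_le _ _
    _ ≤ ε := by linarith
  have hsmul : ∀ (c : ℂ) (w : H), w ∈ D → c • w ∈ D := by
    intro c w hw ε hε
    rcases eq_or_ne c 0 with rfl | hc
    · simpa using hzero ε hε
    · have hcn : 0 < ‖c‖ := norm_pos_iff.2 hc
      obtain ⟨L, hL, hs⟩ := hw (ε / ‖c‖) (by positivity)
      refine ⟨L, hL, ?_⟩
      intro ψ hψ1 hψL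
      have e := hs ψ hψ1 hψL
      have heq : π ψ (c • w) - c • w = c • (π ψ w - w) := by
        rw [_root_.map_smul, smul_sub]
      rw [heq, norm_smul]
      calc ‖c‖ * ‖π ψ w - w‖ ≤ ‖c‖ * (ε / ‖c‖) := mul_le_mul_of_nonneg_left e hcn.le
      _ = ε := by rw [mul_comm]; exact div_mul_cancel₀ ε hcn.ne'
  have hspan : ∀ w ∈ Submodule.span ℂ (Set.range fun p : C₀(X, ℂ) × H => π p.1 p.2), w ∈ D := by
    intro w hw
    refine Submodule.span_induction ?_ hzero (fun a b _ _ ha hb => hadd a b ha hb)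
      (fun c a _ ha => hsmul c a ha) hw
    rintro _ ⟨⟨φ₀, h⟩, rfl⟩
    exact hgen φ₀ h
  have hclosedD : w ∈ closure D → w ∈ D := by
    intro hw ε hε
    obtain ⟨w', hw'D, hw'⟩ := Metric.mem_closure_iff.1 hw (ε / 3) (by positivity)
    rw [dist_eq_norm] at hw'
    obtain ⟨L, hL, hs⟩ := hw'D (ε / 3) (by positivity)
    refine ⟨L, hL, ?_⟩
    intro ψ hψ1 hψL
    have e := hs ψ hψ1 hψL
    have h1 : ‖π ψ (w - w')‖ ≤ ‖w - w'‖ := pi_norm_le π ψ hψ1 _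
    have heq : π ψ w - w = π ψ (w - w') + (π ψ w' - w') + (w' - w) := by
      rw [map_sub]; abel
    rw [heq]
    calc ‖π ψ (w - w') + (π ψ w' - w') + (w' - w)‖
        ≤ ‖π ψ (w - w') + (π ψ w' - w')‖ + ‖w' - w‖ := norm_add_le _ _
    _ ≤ ‖π ψ (w - w')‖ + ‖π ψ w' - w'‖ + ‖w' - w‖ := by
        have := norm_add_le (π ψ (w - w')) (π ψ w' - w')
        linarith
    _ ≤ ε := by
        have h2 : ‖w' - w‖ = ‖w - w'‖ := norm_sub_rev _ _
        rw [h2]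
        linarith
  apply fun ε hε => hclosedD ?_ ε hε
  have : closure (Submodule.span ℂ (Set.range fun p : C₀(X, ℂ) × H => π p.1 p.2) : Set H)
      ⊆ closure D := closure_mono hspan
  exact this (hπnd w)

/-- Existence of a compactly supported cutoff `ψ` with `π ψ K` close to `K`. -/
lemma exists_cutoff
    (hπnd : Dense (Submodule.span ℂ (Set.range fun p : C₀(X, ℂ) × H => π p.1 p.2) : Set H))
    {K : H →L[ℂ] H} (hK : IsCompactOperator ⇑K) {ε : ℝ} (hε : 0 < ε) :
    ∃ ψ : C₀(X, ℂ), HasCompactSupport ⇑ψ ∧ (∀ x, ‖ψ x‖ ≤ 1) ∧ ‖K - π ψ * K‖ ≤ ε := by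
  set S := closure (⇑K '' Metric.closedBall (0 : H) 1) with hSdef
  have hScomp : IsCompact S := hK.isCompact_closure_image_closedBall 1
  obtain ⟨t, htf, hcov⟩ := Metric.totallyBounded_iff.1 hScomp.totallyBounded (ε / 4)
    (by positivity)
  have hall : ∀ y : H, ∃ L : Set X, IsCompact L ∧
      ∀ ψ : C₀(X, ℂ), (∀ x, ‖ψ x‖ ≤ 1) → (∀ x ∈ L, ψ x = 1) → ‖π ψ y - y‖ ≤ ε / 4 :=
    fun y => mem_goodSet_all π hπnd y (ε / 4) (by positivity)
  choose L hLcomp hLspec using hall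
  set Lt : Set X := ⋃ y ∈ t, L y with hLtdef
  have hLtcomp : IsCompact Lt := htf.isCompact_biUnion fun y _ => hLcomp y
  obtain ⟨f, hf1, hf0, hfc, hf01⟩ :=
    exists_continuous_one_zero_of_isCompact hLtcomp isClosed_empty (Set.disjoint_empty _)
  have hzero : Tendsto (fun x : X => ((f x : ℝ) : ℂ)) (cocompact X) (𝓝 0) := by
    have hmem : (tsupport ⇑f)ᶜ ∈ cocompact X := mem_cocompact.2 ⟨tsupport ⇑f, hfc, subset_rfl⟩
    have hev : (fun _ : X => (0 : ℂ)) =ᶠ[cocompact X] fun x : X => ((f x : ℝ) : ℂ) := by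
      filter_upwards [hmem] with x hx
      simp [image_eq_zero_of_notMem_tsupport hx]
    exact Tendsto.congr' hev tendsto_const_nhds
  set ψ : C₀(X, ℂ) :=
    { toFun := fun x => ((f x : ℝ) : ℂ)
      continuous_toFun := Complex.continuous_ofReal.comp f.continuous
      zero_at_infty' := hzero } with hψdef
  have hψsupp : HasCompactSupport ⇑ψ := by
    have : ⇑ψ = (fun r : ℝ => (r : ℂ)) ∘ ⇑f := rfl
    rw [this]
    exact hfc.comp_left Complex.ofReal_zero
  have hψ1 : ∀ x, ‖ψ x‖ ≤ 1 := by
    intro x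
    have := hf01 x
    show ‖((f x : ℝ) : ℂ)‖ ≤ 1
    rw [Complex.norm_real, Real.norm_eq_abs, abs_le]
    constructor <;> linarith [this.1, this.2]
  have hψL : ∀ x ∈ Lt, ψ x = 1 := by
    intro x hx
    show ((f x : ℝ) : ℂ) = 1
    rw [hf1 hx]
    norm_num
  refine ⟨ψ, hψsupp, hψ1, ?_⟩
  have heq : K - π ψ * K = (1 - π ψ) * K := by noncomm_ring
  rw [heq]
  apply opNorm_comp_le_of_ball hε.le
  rintro v ⟨x, hx, rfl⟩
  have hvS : K x ∈ S := subset_closure ⟨x, hx, rfl⟩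
  obtain ⟨y, hyt, hyv⟩ := Set.mem_iUnion₂.1 (hcov hvS)
  rw [Metric.mem_ball, dist_eq_norm] at hyv
  have hy := hLspec y ψ hψ1 (fun x hx => hψL x (Set.mem_biUnion hyt hx))
  have h3 : ‖π ψ (y - K x)‖ ≤ ‖y - K x‖ := pi_norm_le π ψ hψ1 _
  have heq2 : ((1 : H →L[ℂ] H) - π ψ) (K x)
      = (K x - y) + (y - π ψ y) + π ψ (y - K x) := by
    rw [ContinuousLinearMap.sub_apply, ContinuousLinearMap.one_apply, map_sub]
    abel
  rw [heq2]
  have hn1 : ‖K x - y‖ < ε / 4 := hyv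
  have hn2 : ‖y - π ψ y‖ ≤ ε / 4 := by rw [norm_sub_rev]; exact hy
  have hn3 : ‖π ψ (y - K x)‖ ≤ ε / 4 := by
    apply le_trans h3
    rw [norm_sub_rev]
    exact hn1.le
  calc ‖(K x - y) + (y - π ψ y) + π ψ (y - K x)‖
      ≤ ‖(K x - y) + (y - π ψ y)‖ + ‖π ψ (y - K x)‖ := norm_add_le _ _
  _ ≤ (‖K x - y‖ + ‖y - π ψ y‖) + ‖π ψ (y - K x)‖ := by
      have := norm_add_le (K x - y) (y - π ψ y)
      linarith
  _ ≤ ε := by linarith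

end AuxLemmas

theorem statement_7
    (u : G →* unitary (H →L[ℂ] H))
    (hu : ∀ v : H, Continuous fun g : G => (u g : H →L[ℂ] H) v)
    (π : C₀(X, ℂ) →⋆ₙₐ[ℂ] (H →L[ℂ] H))
    (hπnd : Dense (Submodule.span ℂ (Set.range fun p : C₀(X, ℂ) × H => π p.1 p.2) : Set H))
    (hcov : ∀ (g : G) (φ : C₀(X, ℂ)),
      (u g : H →L[ℂ] H) * π φ * ((u g⁻¹ : unitary (H →L[ℂ] H)) : H →L[ℂ] H) = π (C0smul g φ))
    (hproper : IsProperMap fun p : G × X => (p.1 • p.2, p.2))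
    (T : H →L[ℂ] H) (hT : IsCompactOperator (⇑((1 : H →L[ℂ] H) - T ^ 2))) (φ : C₀(X, ℂ)) :
    InC0GK (fun g : G => π φ * ((1 : H →L[ℂ] H) - (conjU u g T) ^ 2)) := by
  classical
  set K : H →L[ℂ] H := (1 : H →L[ℂ] H) - T ^ 2 with hKdef
  have hKcomp : IsCompactOperator ⇑K := hT
  have hconj : ∀ g : G, (1 : H →L[ℂ] H) - (conjU u g T) ^ 2
      = (u g : H →L[ℂ] H) * K * ((u g⁻¹ : unitary (H →L[ℂ] H)) : H →L[ℂ] H) := by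
    intro g
    set A := (u g : H →L[ℂ] H)
    set B := ((u g⁻¹ : unitary (H →L[ℂ] H)) : H →L[ℂ] H)
    have h1 : B * A = 1 := u_inv_mul_cancel u g
    have h2 : A * B = 1 := u_mul_inv_cancel u g
    have e1 : (conjU u g T) ^ 2 = A * T * (B * A) * T * B := by
      rw [pow_two]
      show (A * T * B) * (A * T * B) = A * T * (B * A) * T * B
      noncomm_ring
    rw [e1, h1, mul_one]
    have e2 : (1 : H →L[ℂ] H) = A * 1 * B := by rw [mul_one, h2]
    calc (1 : H →L[ℂ] H) - A * T * T * B = A * 1 * B - A * T * T * B := by rw [← e2]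
    _ = A * ((1 : H →L[ℂ] H) - T ^ 2) * B := by rw [pow_two]; noncomm_ring
  have hfun : (fun g : G => π φ * ((1 : H →L[ℂ] H) - (conjU u g T) ^ 2))
      = fun g : G => π φ * ((u g : H →L[ℂ] H) * K
          * ((u g⁻¹ : unitary (H →L[ℂ] H)) : H →L[ℂ] H)) := by
    funext g
    rw [hconj g]
  rw [hfun]
  refine ⟨?_, ?_, ?_⟩
  · -- continuity
    exact continuous_const.mul (continuous_conj_compact u hu hKcomp)
  · -- compactness
    intro g
    have h1 : IsCompactOperator (⇑K ∘ ⇑((u g⁻¹ : unitary (H →L[ℂ] H)) : H →L[ℂ] H)) :=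
      hKcomp.comp_clm _
    have h2 : IsCompactOperator
        (⇑(π φ * (u g : H →L[ℂ] H))
          ∘ (⇑K ∘ ⇑((u g⁻¹ : unitary (H →L[ℂ] H)) : H →L[ℂ] H))) :=
      h1.clm_comp (π φ * (u g : H →L[ℂ] H))
    have heq : ⇑(π φ * ((u g : H →L[ℂ] H) * K * ((u g⁻¹ : unitary (H →L[ℂ] H)) : H →L[ℂ] H)))
        = ⇑(π φ * (u g : H →L[ℂ] H))
          ∘ (⇑K ∘ ⇑((u g⁻¹ : unitary (H →L[ℂ] H)) : H →L[ℂ] H)) := by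
      funext x
      simp [ContinuousLinearMap.mul_apply]
    rw [heq]
    exact h2
  · -- vanishing at infinity
    rw [Metric.tendsto_nhds]
    intro ε hε
    have hφ1 : (0 : ℝ) < ‖φ‖ + 1 := by positivity
    have hK1 : (0 : ℝ) < ‖K‖ + 1 := by positivity
    obtain ⟨ψ, hψsupp, hψ1, hψK⟩ := exists_cutoff π hπnd hKcomp
      (ε := ε / (2 * (‖φ‖ + 1))) (by positivity)
    set δ := ε / (2 * (‖K‖ + 1)) with hδdef
    have hδpos : 0 < δ := by positivity
    set A : Set X := {x : X | δ ≤ ‖φ x‖} with hAdef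
    have hAcomp : IsCompact A := isCompact_norm_ge φ hδpos
    set B : Set X := tsupport ⇑ψ with hBdef
    have hBcomp : IsCompact B := hψsupp
    set Cset : Set G := Prod.fst '' ((fun p : G × X => (p.1 • p.2, p.2)) ⁻¹' (A ×ˢ B))
      with hCdef
    have hCcomp : IsCompact Cset :=
      (hproper.isCompact_preimage (hAcomp.prod hBcomp)).image continuous_fst
    rw [Filter.eventually_iff, mem_cocompact]
    refine ⟨Cset, hCcomp, ?_⟩
    intro g hg
    simp only [Set.mem_setOf_eq]
    rw [Real.dist_eq, sub_zero, abs_of_nonneg (norm_nonneg _)]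
    -- Split K
    set Ug := (u g : H →L[ℂ] H)
    set Vg := ((u g⁻¹ : unitary (H →L[ℂ] H)) : H →L[ℂ] H)
    have hVU : Vg * Ug = 1 := u_inv_mul_cancel u g
    have hsplit : π φ * (Ug * K * Vg)
        = π φ * (Ug * (K - π ψ * K) * Vg) + π φ * (Ug * (π ψ * K) * Vg) := by
      noncomm_ring
    have hterm2 : π φ * (Ug * (π ψ * K) * Vg)
        = π (φ * C0smul g ψ) * (Ug * K * Vg) := by
      have e1 : Ug * (π ψ * K) * Vg = (Ug * π ψ * Vg) * (Ug * K * Vg) := by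
        have : (Ug * π ψ * Vg) * (Ug * K * Vg) = Ug * π ψ * (Vg * Ug) * K * Vg := by
          noncomm_ring
        rw [this, hVU, mul_one]
        noncomm_ring
      rw [e1, hcov g ψ, ← mul_assoc, ← map_mul]
    have hn1 : ‖π φ * (Ug * (K - π ψ * K) * Vg)‖ ≤ ‖φ‖ * (ε / (2 * (‖φ‖ + 1))) := by
      calc ‖π φ * (Ug * (K - π ψ * K) * Vg)‖
          ≤ ‖π φ‖ * ‖Ug * (K - π ψ * K) * Vg‖ := norm_mul_le _ _
      _ ≤ ‖φ‖ * (ε / (2 * (‖φ‖ + 1))) := by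
          apply mul_le_mul (NonUnitalStarAlgHom.norm_apply_le π φ)
            (le_trans (norm_conj_le u g _) hψK) (norm_nonneg _) (norm_nonneg _)
    have hprod : ∀ x : X, ‖(φ * C0smul g ψ) x‖ ≤ δ := by
      intro x
      have hval : (φ * C0smul g ψ) x = φ x * ψ (g⁻¹ • x) := rfl
      rw [hval]
      by_cases hx : ψ (g⁻¹ • x) = 0
      · rw [hx, mul_zero, norm_zero]; exact hδpos.le
      · have hmemB : g⁻¹ • x ∈ B := subset_tsupport _ hx
        have hφx : ‖φ x‖ < δ := by
          by_contra hcon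
          push_neg at hcon
          apply hg
          refine ⟨(g, g⁻¹ • x), ?_, rfl⟩
          simp only [Set.mem_preimage, Set.mem_prod]
          constructor
          · rw [smul_inv_smul]
            exact hcon
          · exact hmemB
        calc ‖φ x * ψ (g⁻¹ • x)‖ = ‖φ x‖ * ‖ψ (g⁻¹ • x)‖ := norm_mul _ _
        _ ≤ δ * 1 := by
            apply mul_le_mul hφx.le (hψ1 _) (norm_nonneg _) hδpos.le
        _ = δ := mul_one _
    have hprodn : ‖φ * C0smul g ψ‖ ≤ δ := c0_norm_le hδpos.le hprod
    have hn2 : ‖π (φ * C0smul g ψ) * (Ug * K * Vg)‖ ≤ δ * ‖K‖ := by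
      calc ‖π (φ * C0smul g ψ) * (Ug * K * Vg)‖
          ≤ ‖π (φ * C0smul g ψ)‖ * ‖Ug * K * Vg‖ := norm_mul_le _ _
      _ ≤ δ * ‖K‖ := by
          apply mul_le_mul (le_trans (NonUnitalStarAlgHom.norm_apply_le π _) hprodn)
            (norm_conj_le u g K) (norm_nonneg _) hδpos.le
    calc ‖π φ * (Ug * K * Vg)‖
        = ‖π φ * (Ug * (K - π ψ * K) * Vg) + π φ * (Ug * (π ψ * K) * Vg)‖ := by rw [← hsplit]
    _ ≤ ‖π φ * (Ug * (K - π ψ * K) * Vg)‖ + ‖π φ * (Ug * (π ψ * K) * Vg)‖ := norm_add_le _ _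
    _ ≤ ‖φ‖ * (ε / (2 * (‖φ‖ + 1))) + δ * ‖K‖ := by
        rw [hterm2]
        exact add_le_add hn1 hn2
    _ < ε := by
        rw [hδdef]
        have h1 : ‖φ‖ * (ε / (2 * (‖φ‖ + 1))) < ε / 2 := by
          rw [mul_div_assoc']
          rw [div_lt_div_iff₀ (by positivity) (by norm_num)]
          have := norm_nonneg φ
          nlinarith
        have h2 : (ε / (2 * (‖K‖ + 1))) * ‖K‖ < ε / 2 := by
          rw [div_mul_eq_mul_div, div_lt_div_iff₀ (by positivity) (by norm_num)]
          have := norm_nonneg K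
          nlinarith
        linarith

end
end

section
/- Let A be a unital C*-algebra and let D ∈ A be self-adjoint. For every λ ∈ [0,∞) the element 1 + λ² + D² is invertible in A, the A-valued function λ ↦ D(1 + λ² + D²)⁻¹ is Bochner integrable on [0,∞), and (2/π) ∫₀^∞ D(1 + λ² + D²)⁻¹ dλ = f(D), where f(D) denotes the continuous functional calculus of D applied to the function f(t) = t/(1 + t²)^{1/2}. -/
open MeasureTheory

theorem aux_scalar_15 (t : ℝ) :
    ∫ l in Set.Ioi (0:ℝ), t / (1 + l ^ 2 + t ^ 2) =
      (Real.pi / 2) * (t / Real.sqrt (1 + t ^ 2)) := by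
  have h0 : (0:ℝ) < 1 + t ^ 2 := by positivity
  set c := Real.sqrt (1 + t ^ 2) with hcdef
  have hc : 0 < c := Real.sqrt_pos.mpr h0
  have hc2 : c ^ 2 = 1 + t ^ 2 := Real.sq_sqrt h0.le
  have h1 : ∀ l : ℝ, t / (1 + l ^ 2 + t ^ 2)
      = (t / c) * (c⁻¹ * (1 + (c⁻¹ * l) ^ 2)⁻¹) := by
    intro l
    have e1 : 1 + (c⁻¹ * l) ^ 2 = (c ^ 2 + l ^ 2) / c ^ 2 := by
      field_simp
    rw [e1, inv_div]
    rw [hc2]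
    have h2 : (0:ℝ) < 1 + t ^ 2 + l ^ 2 := by positivity
    field_simp
    linear_combination (t*(1+l^2+t^2)) * hc2
  simp_rw [h1]
  rw [integral_const_mul]
  have key := MeasureTheory.integral_comp_mul_left_Ioi
    (fun x : ℝ => c⁻¹ * (1 + x ^ 2)⁻¹) 0 (inv_pos.mpr hc)
  simp only [mul_zero] at key
  rw [key, integral_const_mul, integral_Ioi_inv_one_add_sq, Real.arctan_zero,
    sub_zero, inv_inv, smul_eq_mul]
  field_simp

theorem statement_15
    {A : Type*} [CStarAlgebra A] (D : A) (hD : IsSelfAdjoint D) :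
    (∀ l : ℝ, 0 ≤ l → IsUnit (algebraMap ℂ A (1 + (l : ℂ) ^ 2) + D ^ 2)) ∧
    IntegrableOn
      (fun l : ℝ => D * Ring.inverse (algebraMap ℂ A (1 + (l : ℂ) ^ 2) + D ^ 2))
      (Set.Ici 0) ∧
    (2 / Real.pi) •
        (∫ l in Set.Ici (0 : ℝ), D * Ring.inverse (algebraMap ℂ A (1 + (l : ℂ) ^ 2) + D ^ 2)) =
      cfc (fun t : ℝ => t / Real.sqrt (1 + t ^ 2)) D := by
  have hpos : ∀ l t : ℝ, (0:ℝ) < 1 + l ^ 2 + t ^ 2 := fun l t => by positivity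
  -- rewrite the element as a cfc
  have key : ∀ l : ℝ, algebraMap ℂ A (1 + (l:ℂ) ^ 2) + D ^ 2
      = cfc (fun t : ℝ => 1 + l ^ 2 + t ^ 2) D := by
    intro l
    have h1 : (1 + (l:ℂ) ^ 2) = algebraMap ℝ ℂ (1 + l ^ 2) := by
      simp [Complex.coe_algebraMap]
    rw [h1, ← IsScalarTower.algebraMap_apply ℝ ℂ A]
    have h2 : cfc (fun t : ℝ => 1 + l ^ 2 + t ^ 2) D
        = cfc (fun _ : ℝ => 1 + l ^ 2) D + cfc (fun t : ℝ => t ^ 2) D := by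
      rw [← cfc_add D _ _ (by fun_prop) (by fun_prop)]
    rw [h2, cfc_const _ D hD, cfc_pow_id D 2 hD]
  have hunit : ∀ l : ℝ, IsUnit (algebraMap ℂ A (1 + (l:ℂ) ^ 2) + D ^ 2) := by
    intro l
    rw [key l]
    exact isUnit_cfc _ D (by fun_prop) hD (fun x hx => (hpos l x).ne')
  -- rewrite the integrand as a cfc
  have hcontl : ∀ l : ℝ, Continuous fun t : ℝ => t / (1 + l ^ 2 + t ^ 2) := by
    intro l
    exact Continuous.div continuous_id (by fun_prop) (fun t => (hpos l t).ne')
  have hint : ∀ l : ℝ, D * Ring.inverse (algebraMap ℂ A (1 + (l:ℂ) ^ 2) + D ^ 2)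
      = cfc (fun t : ℝ => t / (1 + l ^ 2 + t ^ 2)) D := by
    intro l
    have h3 := cfc_map_div (fun t : ℝ => t) (fun t : ℝ => 1 + l ^ 2 + t ^ 2) D
      (fun x _ => (hpos l x).ne') (by fun_prop) (by fun_prop) hD
    rw [cfc_id' ℝ D] at h3
    rw [key l, ← h3]
  -- the cfcHom machinery
  let K := spectrum ℝ D
  let φ : C(K, ℝ) →ₗᵢ[ℝ] A :=
    { toLinearMap := ((cfcHom hD (R := ℝ)).toAlgHom).toLinearMap,
      norm_map' := fun f => norm_cfcHom D f hD }
  have hφ : ∀ f : C(K, ℝ), φ f = cfcHom hD (R := ℝ) f := fun f => rfl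
  let F : ℝ → C(K, ℝ) := fun l =>
    ⟨fun x => (x : ℝ) / (1 + l ^ 2 + (x : ℝ) ^ 2),
      Continuous.div continuous_subtype_val (by fun_prop) (fun x => (hpos l x).ne')⟩
  have hFl : ∀ l : ℝ, cfc (fun t : ℝ => t / (1 + l ^ 2 + t ^ 2)) D = φ (F l) := by
    intro l
    rw [cfc_apply _ D hD ((hcontl l).continuousOn), hφ]
    congr 1
  have hfun : (fun l : ℝ => D * Ring.inverse (algebraMap ℂ A (1 + (l:ℂ) ^ 2) + D ^ 2))
      = fun l => φ (F l) := funext fun l => (hint l).trans (hFl l)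
  -- continuity and integrability of F
  have hFc : Continuous F := by
    apply ContinuousMap.continuous_of_continuous_uncurry
    exact Continuous.div (continuous_subtype_val.comp continuous_snd) (by fun_prop)
      (fun p => (hpos p.1 p.2).ne')
  have hM : (0:ℝ) ≤ ‖D‖ * ‖(1:A)‖ := by positivity
  have hspec : ∀ x : K, |(x : ℝ)| ≤ ‖D‖ * ‖(1:A)‖ := by
    intro x
    have := spectrum.subset_closedBall_norm_mul (𝕜 := ℝ) D x.2
    simpa [Real.norm_eq_abs] using this
  have hFb : ∀ l : ℝ, ‖F l‖ ≤ (‖D‖ * ‖(1:A)‖) * (1 + l ^ 2)⁻¹ := by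
    intro l
    refine (ContinuousMap.norm_le _ (by positivity)).mpr fun x => ?_
    show ‖(x : ℝ) / (1 + l ^ 2 + (x:ℝ) ^ 2)‖ ≤ _
    rw [Real.norm_eq_abs, abs_div, abs_of_pos (hpos l x), ← div_eq_mul_inv]
    exact div_le_div₀ hM (hspec x) (by positivity) (by nlinarith [sq_nonneg ((x:ℝ))])
  have hFint : IntegrableOn F (Set.Ici 0) := by
    refine Integrable.mono' (g := fun l : ℝ => (‖D‖ * ‖(1:A)‖) * (1 + l ^ 2)⁻¹)
      ((integrable_inv_one_add_sq.const_mul (‖D‖ * ‖(1:A)‖)).integrableOn)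
      hFc.aestronglyMeasurable ?_
    filter_upwards with l using hFb l
  refine ⟨fun l _ => hunit l, ?_, ?_⟩
  · rw [hfun]
    exact φ.toContinuousLinearMap.integrable_comp hFint
  · rw [hfun]
    have hswap : ∫ l in Set.Ici (0:ℝ), φ (F l) = φ (∫ l in Set.Ici (0:ℝ), F l) :=
      φ.integral_comp_comm F
    rw [hswap]
    -- identify the integral of F
    let f₀ : C(K, ℝ) :=
      ⟨fun x => (x : ℝ) / Real.sqrt (1 + (x : ℝ) ^ 2),
        Continuous.div continuous_subtype_val (by fun_prop)
          (fun x => (Real.sqrt_pos.mpr (by positivity)).ne')⟩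
    have hval : (∫ l in Set.Ici (0:ℝ), F l) = (Real.pi / 2) • f₀ := by
      ext x
      have hx := (ContinuousMap.evalCLM ℝ (x : K)).integral_comp_comm hFint
      have hx' : ∫ l in Set.Ici (0:ℝ), (F l) x = (∫ l in Set.Ici (0:ℝ), F l) x := hx
      rw [← hx']
      have : ∫ l in Set.Ici (0:ℝ), (F l) x
          = ∫ l in Set.Ioi (0:ℝ), (x : ℝ) / (1 + l ^ 2 + (x:ℝ) ^ 2) :=
        MeasureTheory.integral_Ici_eq_integral_Ioi
      rw [this, aux_scalar_15 (x : ℝ)]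
      simp [f₀]
    rw [hval, LinearIsometry.map_smul, smul_smul]
    have hpi : (2 / Real.pi) * (Real.pi / 2) = 1 := by
      field_simp
    rw [hpi, one_smul]
    -- finally φ f₀ = cfc f D
    have hcf : Continuous fun t : ℝ => t / Real.sqrt (1 + t ^ 2) :=
      Continuous.div continuous_id (by fun_prop)
        (fun t => (Real.sqrt_pos.mpr (by positivity)).ne')
    rw [cfc_apply _ D hD hcf.continuousOn, hφ]
    congr 1
end
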